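/- Let q_1,...,q_n ∈ [0,1] and β ≥ 1. Then 1 - ∏_{i=1}^n (1 - q_i/β) ≥ (1/β)·(1 - ∏_{i=1}^n (1 - q_i)). -/
import Mathlib

private lemma aux (β : ℝ) (hβ : 1 ≤ β) : ∀ (n : ℕ) (q : Fin n → ℝ),
    (∀ i, q i ∈ Set.Icc (0 : ℝ) 1) →
    (0 ≤ ∏ i, (1 - q i)) ∧ (∏ i, (1 - q i)) ≤ ∏ i, (1 - q i / β) ∧
    (∏ i, (1 - q i / β)) ≤ 1 ∧
    (1 / β) * (1 - ∏ i, (1 - q i)) ≤ 1 - ∏ i, (1 - q i / β) := by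
  have hβ0 : (0:ℝ) < β := lt_of_lt_of_le one_pos hβ
  intro n
  induction n with
  | zero =>
    intro q hq
    simp
  | succ n ih =>
    intro q hq
    obtain ⟨hP0, hPQ, hQ1, hineq⟩ := ih (fun i => q i.succ) (fun i => hq i.succ)

    obtain ⟨hq00, hq01⟩ := hq 0
    have hb1 : q 0 / β ≤ q 0 := div_le_self hq00 hβ
    have hb0 : 0 ≤ q 0 / β := div_nonneg hq00 hβ0.le
    rw [Fin.prod_univ_succ, Fin.prod_univ_succ]
    set P : ℝ := ∏ i : Fin n, (1 - q i.succ) with hP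
    set Q : ℝ := ∏ i : Fin n, (1 - q i.succ / β) with hQ
    have hQ0 : 0 ≤ Q := le_trans hP0 hPQ
    refine ⟨mul_nonneg (by linarith) hP0, ?_, ?_, ?_⟩
    · exact mul_le_mul (by linarith) hPQ hP0 (by linarith)
    · nlinarith
    · have key : (q 0 / β) * P ≤ (q 0 / β) * Q := mul_le_mul_of_nonneg_left hPQ hb0
      have expand : (1/β) * (1 - (1 - q 0) * P)
          = (1/β) * (1 - P) + (q 0 / β) * P := by
        field_simp; ring
      have expand2 : 1 - (1 - q 0 / β) * Q = (1 - Q) + (q 0 / β) * Q := by ring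
      rw [expand, expand2]
      exact add_le_add hineq key

theorem product_inequality (n : ℕ) (q : Fin n → ℝ)
    (hq : ∀ i, q i ∈ Set.Icc (0 : ℝ) 1) (β : ℝ) (hβ : 1 ≤ β) :
    (1 / β) * (1 - ∏ i, (1 - q i)) ≤ 1 - ∏ i, (1 - q i / β) :=
  (aux β hβ n q hq).2.2.2
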